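/- arXiv:1311.6317 — 5 statements merged into one kernel-verified Lean document; each statement's English description precedes it below -/
import Mathlib

section
/- Let k be an algebraically closed field of characteristic p > 0 and let α = (α_n) be a digit sequence. Then there exist units u_n of the subring k[t,t⁻¹]^{p^n} ⊆ k[t,t⁻¹] satisfying t^{α_n p^n} = u_n · u_{n+1}⁻¹ in k[t,t⁻¹] for all n ≥ 0 if and only if the p-adic integer ∑_{n≥0} α_n p^n is a rational integer, i.e., if and only if the sequence (α_n) is either eventually 0 or eventually p−1. (This expresses that the stratified line bundle O(α) on 𝔾_m is trivial precisely when α ∈ ℤ.) -/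
/-- The element `t` of `k((t))`. -/
noncomputable def tt (k : Type*) [Field k] : LaurentSeries k := HahnSeries.single 1 1

/-- `f ∈ k((t))` lies in the subring `k[t,t⁻¹]^{pⁿ} ⊆ k[t,t⁻¹]`: it is a Laurent
polynomial (finite support) whose support consists of multiples of `pⁿ`. -/
def InLaurentPolyPow (k : Type*) [Field k] (p n : ℕ) (f : LaurentSeries k) : Prop :=
  f.support.Finite ∧ ∀ i ∈ f.support, ((p : ℤ) ^ n) ∣ i

/-- `f` is a unit of the subring `k[t,t⁻¹]^{pⁿ}`. -/
def IsUnitLaurentPolyPow (k : Type*) [Field k] (p n : ℕ) (f : LaurentSeries k) : Prop :=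
  InLaurentPolyPow k p n f ∧ ∃ g, InLaurentPolyPow k p n g ∧ f * g = 1

section Aux

variable {k : Type*} [Field k]

/-- coefficient of a product at a "uniquely decomposable" index. -/
lemma mul_coeff_of_unique (f g : LaurentSeries k) (A B : ℤ)
    (h : ∀ i ∈ f.support, ∀ j ∈ g.support, i + j = A + B → i = A ∧ j = B) :
    (f * g).coeff (A + B) = f.coeff A * g.coeff B := by
  rw [HahnSeries.coeff_mul]
  apply Finset.sum_eq_single (A, B)
  · rintro ⟨i, j⟩ hij hne
    rw [Finset.mem_addAntidiagonal] at hij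
    obtain ⟨h1, h2, h3⟩ := hij
    obtain ⟨rfl, rfl⟩ := h i h1 j h2 h3
    exact absurd rfl hne
  · intro hmem
    by_contra hc
    apply hmem
    rw [Finset.mem_addAntidiagonal]
    exact ⟨left_ne_zero_of_mul hc, right_ne_zero_of_mul hc, rfl⟩

/-- A unit of the Laurent polynomial ring (inside Laurent series) is a monomial. -/
lemma unit_monomial {f g : LaurentSeries k}
    (hf : f.support.Finite) (hg : g.support.Finite) (h : f * g = 1) :
    ∃ (a : ℤ) (c : k), c ≠ 0 ∧ f = HahnSeries.single a c := by
  have hf0 : f ≠ 0 := by rintro rfl; simp at h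
  have hg0 : g ≠ 0 := by rintro rfl; simp at h
  have hfne : hf.toFinset.Nonempty := by
    rw [Set.Finite.toFinset_nonempty]
    exact HahnSeries.support_nonempty_iff.2 hf0
  have hgne : hg.toFinset.Nonempty := by
    rw [Set.Finite.toFinset_nonempty]
    exact HahnSeries.support_nonempty_iff.2 hg0
  set A := hf.toFinset.max' hfne with hA
  set a := hf.toFinset.min' hfne with ha
  set B := hg.toFinset.max' hgne with hB
  set b := hg.toFinset.min' hgne with hb
  have hAm : A ∈ f.support := hf.mem_toFinset.1 (hf.toFinset.max'_mem hfne)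
  have ham : a ∈ f.support := hf.mem_toFinset.1 (hf.toFinset.min'_mem hfne)
  have hBm : B ∈ g.support := hg.mem_toFinset.1 (hg.toFinset.max'_mem hgne)
  have hbm : b ∈ g.support := hg.mem_toFinset.1 (hg.toFinset.min'_mem hgne)
  have hfle : ∀ i ∈ f.support, a ≤ i ∧ i ≤ A := fun i hi =>
    ⟨hf.toFinset.min'_le i (hf.mem_toFinset.2 hi), hf.toFinset.le_max' i (hf.mem_toFinset.2 hi)⟩
  have hgle : ∀ j ∈ g.support, b ≤ j ∧ j ≤ B := fun j hj =>
    ⟨hg.toFinset.min'_le j (hg.mem_toFinset.2 hj), hg.toFinset.le_max' j (hg.mem_toFinset.2 hj)⟩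
  have htop : (f * g).coeff (A + B) = f.coeff A * g.coeff B := by
    apply mul_coeff_of_unique
    intro i hi j hj hij
    have h1 := hfle i hi
    have h2 := hgle j hj
    omega
  have hbot : (f * g).coeff (a + b) = f.coeff a * g.coeff b := by
    apply mul_coeff_of_unique
    intro i hi j hj hij
    have h1 := hfle i hi
    have h2 := hgle j hj
    omega
  have hABmem : A + B = 0 := by
    have hne : (f * g).coeff (A + B) ≠ 0 := by
      rw [htop]; exact mul_ne_zero hAm hBm
    rw [h] at hne
    simpa [HahnSeries.coeff_one] using (by
      by_contra hc
      rw [HahnSeries.coeff_one, if_neg hc] at hne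
      exact hne rfl : A + B = 0)
  have habmem : a + b = 0 := by
    have hne : (f * g).coeff (a + b) ≠ 0 := by
      rw [hbot]; exact mul_ne_zero ham hbm
    rw [h] at hne
    by_contra hc
    rw [HahnSeries.coeff_one, if_neg hc] at hne
    exact hne rfl
  have haA : a = A := by
    have h1 := (hfle A hAm).1
    have h2 := (hgle B hBm).1
    omega
  refine ⟨A, f.coeff A, hAm, ?_⟩
  apply HahnSeries.coeff_injective
  funext i
  rw [HahnSeries.coeff_single]
  split_ifs with hi
  · rw [hi]
  · by_contra hci
    have hmem : i ∈ f.support := hci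
    have := hfle i hmem
    omega

lemma single_inv' (a : ℤ) {c : k} (hc : c ≠ 0) :
    (HahnSeries.single a c : LaurentSeries k)⁻¹ = HahnSeries.single (-a) c⁻¹ :=
  inv_eq_of_mul_eq_one_right (by
    rw [HahnSeries.single_mul_single, add_neg_cancel, mul_inv_cancel₀ hc,
      HahnSeries.single_zero_one])

/-- The key arithmetic lemma: digits with a nonnegative "value" sequence are eventually 0. -/
lemma digits_eventually_zero (p : ℕ) (hp2 : 2 ≤ p) (α : ℕ → ℕ) (hα : ∀ n, α n < p)
    (m : ℕ → ℤ) (hm : ∀ n, m n = α n + p * m (n + 1)) (h0 : 0 ≤ m 0) :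
    ∃ N, ∀ n, N ≤ n → α n = 0 := by
  have hpos : ∀ n, 0 ≤ m n := by
    intro n
    induction n with
    | zero => exact h0
    | succ n ih =>
      by_contra hcon
      push_neg at hcon
      have h1 : m (n + 1) ≤ -1 := by omega
      have h2 : (p : ℤ) * m (n + 1) ≤ (p : ℤ) * (-1) :=
        mul_le_mul_of_nonneg_left h1 (by positivity)
      have h3 : (α n : ℤ) ≤ (p : ℤ) - 1 := by
        have := hα n; omega
      have h4 := hm n
      linarith
  have hzero : ∀ n, m n = 0 → m (n + 1) = 0 := by
    intro n hn
    have h1 := hm n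
    have h2 : (0 : ℤ) ≤ (α n : ℤ) := Int.natCast_nonneg _
    have h3 : (0 : ℤ) ≤ (p : ℤ) * m (n + 1) :=
      mul_nonneg (by positivity) (hpos (n + 1))
    have h4 : (p : ℤ) * m (n + 1) = 0 := by omega
    have hpne : (p : ℤ) ≠ 0 := by positivity
    exact (mul_eq_zero.1 h4).resolve_left hpne
  have hdec : ∀ n, 1 ≤ m (n + 1) → m (n + 1) + 1 ≤ m n := by
    intro n hn
    have h1 := hm n
    have h2 : (2 : ℤ) * m (n + 1) ≤ (p : ℤ) * m (n + 1) :=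
      mul_le_mul_of_nonneg_right (by exact_mod_cast hp2) (hpos (n + 1))
    have h3 : (0 : ℤ) ≤ (α n : ℤ) := Int.natCast_nonneg _
    linarith
  have hclaim : ∀ n, m n = 0 ∨ m n + n ≤ m 0 := by
    intro n
    induction n with
    | zero => right; simp
    | succ n ih =>
      rcases ih with h | h
      · left; exact hzero n h
      · rcases eq_or_lt_of_le (hpos (n + 1)) with heq | hlt
        · left; exact heq.symm
        · right
          have := hdec n (by omega)
          push_cast
          linarith
  refine ⟨(m 0).toNat, fun n hn => ?_⟩
  have hmn : ∀ j, (m 0).toNat ≤ j → m j = 0 := by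
    intro j hj
    rcases hclaim j with h | h
    · exact h
    · have h1 := hpos j
      omega
  have h1 := hmn n hn
  have h2 := hmn (n + 1) (by omega)
  have h3 := hm n
  rw [h1, h2] at h3
  simp at h3
  omega

/-- Build the unit sequence from an integer sequence satisfying the recurrence. -/
lemma build_units (p : ℕ) (_hp : 0 < p) (α : ℕ → ℕ) (m : ℕ → ℤ)
    (hm : ∀ n, m n = α n + p * m (n + 1)) :
    ∃ u : ℕ → LaurentSeries k,
      (∀ n, IsUnitLaurentPolyPow k p n (u n)) ∧
        ∀ n, (tt k) ^ (α n * p ^ n) = u n * (u (n + 1))⁻¹ := by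
  refine ⟨fun n => HahnSeries.single ((p : ℤ) ^ n * m n) 1, fun n => ?_, fun n => ?_⟩
  · constructor
    · constructor
      · rw [HahnSeries.support_single_of_ne (one_ne_zero)]
        exact Set.finite_singleton _
      · intro i hi
        rw [HahnSeries.support_single_of_ne (one_ne_zero)] at hi
        rw [Set.mem_singleton_iff] at hi
        exact ⟨m n, hi⟩
    · refine ⟨HahnSeries.single (-((p : ℤ) ^ n * m n)) 1, ⟨?_, ?_⟩, ?_⟩
      · rw [HahnSeries.support_single_of_ne (one_ne_zero)]
        exact Set.finite_singleton _
      · intro i hi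
        rw [HahnSeries.support_single_of_ne (one_ne_zero)] at hi
        rw [Set.mem_singleton_iff] at hi
        exact ⟨-m n, by rw [hi]; ring⟩
      · rw [HahnSeries.single_mul_single, add_neg_cancel, mul_one,
          HahnSeries.single_zero_one]
  · rw [tt, HahnSeries.single_pow, single_inv' _ (one_ne_zero),
      HahnSeries.single_mul_single, inv_one, mul_one, one_pow]
    have hAB : (α n * p ^ n : ℕ) • (1 : ℤ) = (p : ℤ) ^ n * m n + -((p : ℤ) ^ (n + 1) * m (n + 1)) := by
      rw [nsmul_eq_mul, mul_one]
      push_cast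
      linear_combination (-(p : ℤ) ^ n) * hm n
    rw [hAB]

end Aux

/-- **Triviality of the stratified line bundle `O(α)` on `𝔾ₘ`.**
For a digit sequence `α = (α n)` with `0 ≤ α n < p`, there exist units `u n` of
`k[t,t⁻¹]^{pⁿ}` with `t^{αₙ pⁿ} = uₙ · u_{n+1}⁻¹` for all `n` iff the `p`-adic integer
`∑ αₙ pⁿ` is a rational integer, i.e. iff `(α n)` is eventually `0` or eventually
`p - 1`. -/
theorem stratified_line_bundle_on_Gm_trivial_iff
    (k : Type*) [Field k] [IsAlgClosed k] (p : ℕ) [CharP k p] (hp : 0 < p)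
    (α : ℕ → ℕ) (hα : ∀ n, α n < p) :
    (∃ u : ℕ → LaurentSeries k,
        (∀ n, IsUnitLaurentPolyPow k p n (u n)) ∧
          ∀ n, (tt k) ^ (α n * p ^ n) = u n * (u (n + 1))⁻¹)
      ↔ ((∃ N, ∀ n, N ≤ n → α n = 0) ∨ (∃ N, ∀ n, N ≤ n → α n = p - 1)) := by
  have hprime : p.Prime := (CharP.char_is_prime_or_zero k p).resolve_right (by omega)
  have hp2 : 2 ≤ p := hprime.two_le
  constructor
  · rintro ⟨u, hu, heq⟩
    -- each u n is a monomial
    have hmono : ∀ n, ∃ a : ℤ, ∃ cc : k, cc ≠ 0 ∧ u n = HahnSeries.single a cc := by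
      intro n
      obtain ⟨⟨hfin, _⟩, g, ⟨hgfin, _⟩, hmul⟩ := hu n
      exact unit_monomial hfin hgfin hmul
    choose d c hc hform using hmono
    have hdvd : ∀ n, ((p : ℤ) ^ n) ∣ d n := by
      intro n
      obtain ⟨⟨hfin, hdv⟩, _⟩ := hu n
      apply hdv
      rw [hform n, HahnSeries.support_single_of_ne (hc n)]
      exact rfl
    have hd : ∀ n, d n = (α n : ℤ) * (p : ℤ) ^ n + d (n + 1) := by
      intro n
      have h := heq n
      rw [hform n, hform (n + 1), single_inv' _ (hc (n + 1)),
        HahnSeries.single_mul_single, tt, HahnSeries.single_pow] at h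
      have h2 := congrArg HahnSeries.order h
      rw [HahnSeries.order_single (by simp), HahnSeries.order_single
        (mul_ne_zero (hc n) (inv_ne_zero (hc (n + 1))))] at h2
      rw [nsmul_eq_mul, mul_one] at h2
      push_cast at h2
      linarith
    choose m hmspec using hdvd
    have hm : ∀ n, m n = α n + p * m (n + 1) := by
      intro n
      have h := hd n
      rw [hmspec n, hmspec (n + 1)] at h
      have hpow : ((p : ℤ) ^ n) ≠ 0 := by positivity
      apply mul_left_cancel₀ hpow
      rw [h]; ring
    rcases le_or_gt 0 (m 0) with h0 | h0
    · left
      exact digits_eventually_zero p hp2 α hα m hm h0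
    · right
      have hm' : ∀ n, (-1 - m n) = ((p - 1 - α n : ℕ) : ℤ) + p * (-1 - m (n + 1)) := by
        intro n
        have h1 := hm n
        have h2 := hα n
        have hcast : ((p - 1 - α n : ℕ) : ℤ) = (p : ℤ) - 1 - α n := by
          have : α n ≤ p - 1 := by omega
          push_cast [Nat.cast_sub (by omega : 1 ≤ p), Nat.cast_sub this]
          omega
        rw [hcast]
        linarith
      obtain ⟨N, hN⟩ := digits_eventually_zero p hp2 (fun n => p - 1 - α n)
        (fun n => by show p - 1 - α n < p; have := hα n; omega) (fun n => -1 - m n) hm'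
        (by show (0 : ℤ) ≤ -1 - m 0; omega)
      refine ⟨N, fun n hn => ?_⟩
      have := hN n hn
      have := hα n
      omega
  · rintro (⟨N, hN⟩ | ⟨N, hN⟩)
    · apply build_units p hp α (fun n => ∑ i ∈ Finset.Ico n N, (α i : ℤ) * (p : ℤ) ^ (i - n))
      intro n
      rcases le_or_gt N n with hn | hn
      · rw [Finset.Ico_eq_empty (by omega), Finset.Ico_eq_empty (by omega),
          Finset.sum_empty, Finset.sum_empty, hN n hn]
        simp
      · rw [Finset.sum_eq_sum_Ico_succ_bot hn]
        have h1 : ∑ i ∈ Finset.Ico (n + 1) N, (α i : ℤ) * (p : ℤ) ^ (i - n)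
            = (p : ℤ) * ∑ i ∈ Finset.Ico (n + 1) N, (α i : ℤ) * (p : ℤ) ^ (i - (n + 1)) := by
          rw [Finset.mul_sum]
          apply Finset.sum_congr rfl
          intro i hi
          rw [Finset.mem_Ico] at hi
          have h2 : i - n = (i - (n + 1)) + 1 := by omega
          rw [h2, pow_succ]
          ring
        rw [h1, Nat.sub_self, pow_zero, mul_one]
    · apply build_units p hp α
        (fun n => (∑ i ∈ Finset.Ico n N, (α i : ℤ) * (p : ℤ) ^ (i - n)) - (p : ℤ) ^ (N - n))
      intro n
      rcases le_or_gt N n with hn | hn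
      · rw [Finset.Ico_eq_empty (by omega), Finset.Ico_eq_empty (by omega),
          Finset.sum_empty, Finset.sum_empty, hN n hn,
          Nat.sub_eq_zero_of_le (by omega : N ≤ n), Nat.sub_eq_zero_of_le (by omega : N ≤ n + 1),
          pow_zero]
        have hcast : ((p - 1 : ℕ) : ℤ) = (p : ℤ) - 1 := by
          push_cast [Nat.cast_sub (by omega : 1 ≤ p)]; ring
        rw [hcast]
        ring
      · have hpow : (p : ℤ) ^ (N - n) = (p : ℤ) * (p : ℤ) ^ (N - (n + 1)) := by
          have h2 : N - n = (N - (n + 1)) + 1 := by omega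
          rw [h2, pow_succ]; ring
        rw [Finset.sum_eq_sum_Ico_succ_bot hn]
        have h1 : ∑ i ∈ Finset.Ico (n + 1) N, (α i : ℤ) * (p : ℤ) ^ (i - n)
            = (p : ℤ) * ∑ i ∈ Finset.Ico (n + 1) N, (α i : ℤ) * (p : ℤ) ^ (i - (n + 1)) := by
          rw [Finset.mul_sum]
          apply Finset.sum_congr rfl
          intro i hi
          rw [Finset.mem_Ico] at hi
          have h2 : i - n = (i - (n + 1)) + 1 := by omega
          rw [h2, pow_succ]
          ring
        rw [h1, hpow, Nat.sub_self, pow_zero, mul_one]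
        ring
end

section
/- Let k be an algebraically closed field of characteristic p > 0, let α = (α_n) be a digit sequence, and let (a_n)_{n≥0} be a sequence with a_n ∈ k((t)) and supp(a_n) ⊆ p^nℤ for all n. Then there exist y_n ∈ k((t)) with supp(y_n) ⊆ p^nℤ and y_0 = 0 such that for every n ≥ 0 the element a'_n := a_n − y_n + t^{α_n p^n}·y_{n+1} satisfies supp(a'_n) ⊆ p^nℤ \ (α_n p^n + p^{n+1}ℤ). (Every class in the α-twisted derived limit of the additive groups k((t))^{p^n} has a representative satisfying this support condition; the same proof applies with k[t,t⁻¹] or k((t⁻¹)) in place of k((t)).) -/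
open Classical in
/-- Shifted projection: coefficient at `i` is `f.coeff (i + c)` if `m ∣ i`, else `0`. -/
noncomputable def shiftProj {k : Type*} [Field k] (c m : ℤ) (f : LaurentSeries k) :
    LaurentSeries k where
  coeff i := if m ∣ i then f.coeff (i + c) else 0
  isPWO_support' := by
    apply (f.isPWO_support.image_of_monotone (f := fun j => j - c)
      (fun x y h => by dsimp only; omega)).mono
    intro i hi
    simp only [Function.mem_support] at hi
    refine ⟨i + c, ?_, by ring⟩
    by_contra h
    simp [HahnSeries.coeff, Function.mem_support, not_not] at h
    simp [h] at hi

theorem shiftProj_coeff {k : Type*} [Field k] (c m : ℤ) (f : LaurentSeries k) (i : ℤ) :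
    (shiftProj c m f).coeff i = if m ∣ i then f.coeff (i + c) else 0 := by
  classical
  rfl

/-- **Normal form of representatives of the twisted derived limit (Lemma 5.9 a)).**
Let `α = (α n)` be a digit sequence and `(a n)` a sequence in `k((t))` with
`supp(a n) ⊆ pⁿℤ`.  Then there are `y n ∈ k((t))` with `supp(y n) ⊆ pⁿℤ` and `y 0 = 0`
such that each `a'ₙ := aₙ − yₙ + t^{αₙ pⁿ}·y_{n+1}` has support contained in
`pⁿℤ \ (αₙ pⁿ + p^{n+1}ℤ)`. -/
theorem twisted_rlim_representative_support_condition
    (k : Type*) [Field k] [IsAlgClosed k] (p : ℕ) [CharP k p] (hp : 0 < p)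
    (α : ℕ → ℕ) (hα : ∀ n, α n < p)
    (a : ℕ → LaurentSeries k)
    (ha : ∀ n, ∀ i ∈ (a n).support, ((p : ℤ) ^ n) ∣ i) :
    ∃ y : ℕ → LaurentSeries k,
      (∀ n, ∀ i ∈ (y n).support, ((p : ℤ) ^ n) ∣ i) ∧
      y 0 = 0 ∧
      ∀ n, ∀ i ∈ (a n - y n + (tt k) ^ (α n * p ^ n) * y (n + 1)).support,
        ((p : ℤ) ^ n) ∣ i ∧ ¬ ((p : ℤ) ^ (n + 1) ∣ i - (α n * p ^ n : ℕ)) := by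
  classical
  set y : ℕ → LaurentSeries k := fun n =>
    Nat.rec 0 (fun n yn => shiftProj ((α n * p ^ n : ℕ) : ℤ) ((p : ℤ) ^ (n + 1)) (yn - a n)) n
    with hy
  have hy0 : y 0 = 0 := rfl
  have hysucc : ∀ n, y (n + 1) =
      shiftProj ((α n * p ^ n : ℕ) : ℤ) ((p : ℤ) ^ (n + 1)) (y n - a n) := fun n => rfl
  have hsupp : ∀ n, ∀ i ∈ (y n).support, ((p : ℤ) ^ n) ∣ i := by
    intro n
    cases n with
    | zero => simp [hy0]
    | succ n =>
      intro i hi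
      rw [hysucc, HahnSeries.mem_support, shiftProj_coeff] at hi
      by_contra h
      simp [h] at hi
  -- coefficient of t^c * y(n+1)
  have htt : ∀ (c : ℕ) (f : LaurentSeries k) (i : ℤ),
      ((tt k) ^ c * f).coeff i = f.coeff (i - c) := by
    intro c f i
    have : (tt k) ^ c = HahnSeries.single (c : ℤ) (1 : k) := by
      rw [tt, HahnSeries.single_pow]; simp
    rw [this]
    have := HahnSeries.coeff_single_mul_add (r := (1 : k)) (x := f) (a := i - c) (b := (c : ℤ))
    simpa using this
  refine ⟨y, hsupp, hy0, ?_⟩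
  intro n i hi
  rw [HahnSeries.mem_support, HahnSeries.coeff_add, HahnSeries.coeff_sub, htt,
    hysucc, shiftProj_coeff] at hi
  have hnd : ¬ ((p : ℤ) ^ (n + 1) ∣ i - (α n * p ^ n : ℕ)) := by
    intro h
    simp only [h, if_pos, HahnSeries.coeff_sub, sub_add_cancel] at hi
    exact hi (by ring)
  refine ⟨?_, hnd⟩
  rw [if_neg hnd, add_zero] at hi
  have hai : i ∈ (a n).support ∨ i ∈ (y n).support := by
    by_contra h
    push_neg at h
    simp only [HahnSeries.mem_support, not_not] at h
    simp [h.1, h.2] at hi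
  rcases hai with h | h
  · exact ha n i h
  · exact hsupp n i h
end

section
/- Let k be an algebraically closed field of characteristic p > 0 and let α = (α_n) be an admissible digit sequence. Let (a_n)_{n≥0} be a sequence with a_n ∈ k((t)) and supp(a_n) ⊆ p^nℤ \ (α_n p^n + p^{n+1}ℤ) for all n. Then the following are equivalent: (i) there exist y_n ∈ k((t)) with supp(y_n) ⊆ p^nℤ such that a_n = y_n − t^{α_n p^n}·y_{n+1} for all n ≥ 0; (ii) there exists N such that for all n ≥ N one has a_n ∈ k⟦t⟧, i.e., supp(a_n) ⊆ ℤ_{≥0}. -/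
/-- A digit sequence `α` (with `0 ≤ α n < p`) is admissible if either all digits vanish,
or the `p`-adic integer `∑ αₙ pⁿ` is not a rational integer (i.e. `(α n)` is neither
eventually `0` nor eventually `p − 1`). -/
def AdmissibleDigits (p : ℕ) (α : ℕ → ℕ) : Prop :=
  (∀ n, α n = 0) ∨
    ¬ ((∃ N, ∀ n, N ≤ n → α n = 0) ∨ (∃ N, ∀ n, N ≤ n → α n = p - 1))

private lemma coeff_bound {k : Type*} [Field k] (x : LaurentSeries k) :
    ∃ L : ℤ, ∀ i < L, x.coeff i = 0 := by
  rcases eq_or_ne x 0 with h | h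
  · exact ⟨0, fun i _ => by simp [h]⟩
  · exact ⟨x.order, fun i hi => HahnSeries.coeff_eq_zero_of_lt_order hi⟩

private lemma isPWO_of_bdd {s : Set ℤ} (L : ℤ) (h : ∀ x ∈ s, L ≤ x) : s.IsPWO :=
  (Set.isPWO_iff_isWF).mpr (BddBelow.wellFoundedOn_lt ⟨L, fun x hx => h x hx⟩)

private lemma tt_pow_mul_coeff {k : Type*} [Field k] (c : ℕ) (x : LaurentSeries k) (j : ℤ) :
    ((tt k) ^ c * x).coeff j = x.coeff (j - (c : ℤ)) := by
  have h1 : (tt k) ^ c = HahnSeries.single (c : ℤ) 1 := by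
    rw [tt, HahnSeries.single_pow, one_pow, nsmul_eq_mul, mul_one]
  rw [h1]
  have h2 := HahnSeries.coeff_single_mul_add (r := (1:k)) (x := x) (a := j - (c:ℤ)) (b := (c:ℤ))
  rw [sub_add_cancel] at h2
  rw [h2, one_mul]

private lemma construct {k : Type*} [Field k] (p : ℕ) (α : ℕ → ℕ)
    (a : ℕ → LaurentSeries k)
    (ha1 : ∀ n, ∀ i ∈ (a n).support, ((p : ℤ) ^ n) ∣ i)
    (B : ℕ → ℕ → ℕ)
    (HB : ∀ n m (j : ℤ), n ≤ m → B n j.toNat ≤ m →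
      (a m).coeff (j - ((∑ t ∈ Finset.Ico n m, α t * p ^ t : ℕ) : ℤ)) = 0) :
    ∃ y : ℕ → LaurentSeries k,
      (∀ n, ∀ i ∈ (y n).support, ((p : ℤ) ^ n) ∣ i) ∧
      ∀ n, a n = y n - (tt k) ^ (α n * p ^ n) * y (n + 1) := by
  classical
  set C : ℕ → ℕ → ℕ := fun n m => ∑ t ∈ Finset.Ico n m, α t * p ^ t with hC
  set T : ℕ → ℕ → ℤ → k := fun n m j => (a m).coeff (j - (C n m : ℤ)) with hT
  set Fs : ℕ → ℕ → ℤ → k := fun n K j => ∑ m ∈ Finset.Ico n K, T n m j with hFs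
  set F : ℕ → ℤ → k := fun n j => Fs n (B n j.toNat) j with hF
  have stab : ∀ n K (j : ℤ), B n j.toNat ≤ K → Fs n K j = F n j := by
    intro n K j hK
    rcases le_or_gt n (B n j.toNat) with h | h
    · rw [hF]
      have hsplit := Finset.sum_Ico_consecutive (fun m => T n m j) h hK
      have hz : ∑ m ∈ Finset.Ico (B n j.toNat) K, T n m j = 0 := by
        apply Finset.sum_eq_zero
        intro m hm
        simp only [Finset.mem_Ico] at hm
        exact HB n m j (le_trans h hm.1) hm.1
      simp only [hFs] at hsplit ⊢
      rw [← hsplit, hz, add_zero]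
    · have h1 : F n j = 0 := by
        simp only [hF, hFs]
        rw [Finset.Ico_eq_empty (by omega), Finset.sum_empty]
      have h2 : Fs n K j = 0 := by
        apply Finset.sum_eq_zero
        intro m hm
        simp only [Finset.mem_Ico] at hm
        exact HB n m j hm.1 (by omega)
      rw [h1, h2]
  have hCsplit : ∀ n m, n < m → C n m = α n * p ^ n + C (n+1) m := by
    intro n m hnm
    simpa [hC] using Finset.sum_eq_sum_Ico_succ_bot hnm (fun t => α t * p ^ t)
  have hrec : ∀ n (j : ℤ), F n j = (a n).coeff j + F (n+1) (j - ((α n * p ^ n : ℕ) : ℤ)) := by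
    intro n j
    set c : ℤ := ((α n * p ^ n : ℕ) : ℤ) with hc
    set K := max (max (B n j.toNat) (B (n+1) (j - c).toNat)) (n+1) with hK
    rw [← stab n K j (by omega), ← stab (n+1) K (j - c) (by omega)]
    simp only [hFs]
    rw [Finset.sum_eq_sum_Ico_succ_bot (show n < K by omega) (fun m => T n m j)]
    congr 1
    · simp [hT, hC]
    · apply Finset.sum_congr rfl
      intro m hm
      simp only [Finset.mem_Ico] at hm
      simp only [hT]
      congr 1
      have h := hCsplit n m (by omega)
      rw [h, hc]
      push_cast
      ring
  have hdvd : ∀ n (j : ℤ), ¬ ((p:ℤ)^n ∣ j) → F n j = 0 := by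
    intro n j hnd
    apply Finset.sum_eq_zero
    intro m hm
    simp only [Finset.mem_Ico] at hm
    by_contra hne
    have hmem : (j - (C n m : ℤ)) ∈ (a m).support := hne
    have h1 : ((p:ℤ)^m) ∣ (j - (C n m : ℤ)) := ha1 m _ hmem
    have h2 : ((p:ℤ)^n) ∣ (C n m : ℤ) := by
      simp only [hC]
      push_cast
      apply Finset.dvd_sum
      intro t ht
      simp only [Finset.mem_Ico] at ht
      exact Dvd.dvd.mul_left (pow_dvd_pow _ ht.1) _
    have h3 : ((p:ℤ)^n) ∣ (j - (C n m : ℤ)) := dvd_trans (pow_dvd_pow _ hm.1) h1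
    have h4 := dvd_add h3 h2
    rw [sub_add_cancel] at h4
    exact hnd h4
  have hlb : ∀ n, ∃ L : ℤ, ∀ j < L, F n j = 0 := by
    intro n
    choose Lm hLm using fun m => coeff_bound (a m)
    set s := Finset.Ico n (B n 0) with hs
    set g : ℕ → ℤ := fun m => Lm m + (C n m : ℤ) with hg
    refine ⟨min 0 (-(∑ m ∈ s, |g m|)), ?_⟩
    intro j hj
    have hj0 : j < 0 := lt_of_lt_of_le hj (min_le_left _ _)
    have hjt : j.toNat = 0 := Int.toNat_eq_zero.mpr hj0.le
    simp only [hF, hFs, hjt]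
    apply Finset.sum_eq_zero
    intro m hm
    have hgb : -(∑ m ∈ s, |g m|) ≤ g m := by
      have h1 : |g m| ≤ ∑ x ∈ s, |g x| :=
        Finset.single_le_sum (fun x _ => abs_nonneg (g x)) hm
      have := neg_abs_le (g m)
      omega
    have h6 := lt_of_lt_of_le hj (min_le_right _ _)
    have hgm : g m = Lm m + (C n m : ℤ) := rfl
    have : j - (C n m : ℤ) < Lm m := by omega
    exact hLm m _ this
  choose L hL using hlb
  refine ⟨fun n =>
    { coeff := F n,
      isPWO_support' := isPWO_of_bdd (L n) (by
        intro x hx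
        by_contra hlt
        exact hx (hL n x (by omega))) }, ?_, ?_⟩
  · intro n i hi
    by_contra h
    exact hi (hdvd n i h)
  · intro n
    ext j
    rw [HahnSeries.coeff_sub, tt_pow_mul_coeff]
    show (a n).coeff j = F n j - F (n+1) (j - ((α n * p ^ n : ℕ) : ℤ))
    rw [hrec n j]
    ring


/-- **Triviality criterion over `k((t))` (Lemma 5.9 b)).**
Let `α` be an admissible digit sequence and `(a n)` a sequence in `k((t))` with
`supp(aₙ) ⊆ pⁿℤ \ (αₙ pⁿ + p^{n+1}ℤ)`.  Then the class of `(a n)` in the `α`-twisted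
derived limit is trivial, i.e. there exist `yₙ ∈ k((t))` with `supp(yₙ) ⊆ pⁿℤ` and
`aₙ = yₙ − t^{αₙ pⁿ}·y_{n+1}` for all `n`, iff `aₙ ∈ k⟦t⟧` for all large `n`. -/
theorem twisted_rlim_trivial_iff_laurent_series
    (k : Type*) [Field k] [IsAlgClosed k] (p : ℕ) [CharP k p] (hp : 0 < p)
    (α : ℕ → ℕ) (hα : ∀ n, α n < p) (hadm : AdmissibleDigits p α)
    (a : ℕ → LaurentSeries k)
    (ha : ∀ n, ∀ i ∈ (a n).support,
      ((p : ℤ) ^ n) ∣ i ∧ ¬ ((p : ℤ) ^ (n + 1) ∣ i - (α n * p ^ n : ℕ))) :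
    (∃ y : ℕ → LaurentSeries k,
        (∀ n, ∀ i ∈ (y n).support, ((p : ℤ) ^ n) ∣ i) ∧
        ∀ n, a n = y n - (tt k) ^ (α n * p ^ n) * y (n + 1))
      ↔ (∃ N, ∀ n, N ≤ n → ∀ i ∈ (a n).support, 0 ≤ i) := by
  have hp2 : 2 ≤ p := by
    haveI : NeZero p := ⟨hp.ne'⟩
    exact (CharP.char_is_prime_of_pos k p).out.two_le
  have hpow_pos : ∀ n, (0:ℤ) < (p:ℤ)^n := fun n =>
    pow_pos (by exact_mod_cast (by omega : 0 < p)) n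
  constructor
  · rintro ⟨y, hy, heq⟩
    have hco : ∀ n (i : ℤ), (a n).coeff i
        = (y n).coeff i - (y (n+1)).coeff (i - ((α n * p ^ n : ℕ) : ℤ)) := by
      intro n i
      rw [heq n, HahnSeries.coeff_sub, tt_pow_mul_coeff]
    have hy0 : ∀ n (j : ℤ), ¬ ((p:ℤ)^n ∣ j) → (y n).coeff j = 0 := by
      intro n j h
      by_contra hne
      exact h (hy n j hne)
    have h2 : ∀ n (j : ℤ), ((p:ℤ)^(n+1)) ∣ j →
        (y (n+1)).coeff j = (y n).coeff (j + ((α n * p ^ n : ℕ) : ℤ)) := by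
      intro n j hdvd
      have hz : (a n).coeff (j + ((α n * p ^ n : ℕ) : ℤ)) = 0 := by
        by_contra hne
        exact (ha n _ hne).2 (by simpa using hdvd)
      have h := hco n (j + ((α n * p ^ n : ℕ) : ℤ))
      rw [hz, add_sub_cancel_right] at h
      exact (eq_of_sub_eq_zero h.symm).symm
    set C0 : ℕ → ℕ := fun n => ∑ t ∈ Finset.range n, α t * p ^ t with hC0
    have hC0succ : ∀ n, C0 (n+1) = C0 n + α n * p ^ n := by
      intro n; simp [hC0, Finset.sum_range_succ]
    have h3 : ∀ n (j : ℤ), ((p:ℤ)^n) ∣ j → (y n).coeff j = (y 0).coeff (j + (C0 n : ℤ)) := by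
      intro n
      induction n with
      | zero => intro j _; simp [hC0]
      | succ n ih =>
        intro j hdvd
        have hd2 : ((p:ℤ)^n) ∣ j + ((α n * p ^ n : ℕ) : ℤ) := by
          refine dvd_add (dvd_trans (pow_dvd_pow _ (Nat.le_succ n)) hdvd) ?_
          push_cast
          exact Dvd.intro_left _ rfl
        rw [h2 n j hdvd, ih _ hd2]
        congr 1
        rw [hC0succ n]
        push_cast
        ring
    obtain ⟨v, hv⟩ := coeff_bound (y 0)
    have hnep : ∀ M, ∃ n, M ≤ n ∧ α n ≠ p - 1 := by
      rcases hadm with hall | hne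
      · intro M; exact ⟨M, le_refl M, by rw [hall M]; omega⟩
      · push_neg at hne
        exact hne.2
    set D : ℕ → ℤ := fun n => (C0 n : ℤ) - (p:ℤ)^n with hD
    have hDsucc : ∀ n, D (n+1) = D n + ((α n : ℤ) + 1) * (p:ℤ)^n - (p:ℤ)^(n+1) := by
      intro n
      simp only [hD, hC0succ n]
      push_cast
      ring
    have hmono : ∀ m n, m ≤ n → D n ≤ D m := by
      have h : ∀ n, D (n+1) ≤ D n := by
        intro n
        rw [hDsucc n, pow_succ]
        have h1 : ((α n : ℤ) + 1) ≤ (p:ℤ) := by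
          have := hα n; omega
        have h2 := mul_le_mul_of_nonneg_right h1 (hpow_pos n).le
        linarith
      exact fun m n hmn => antitone_nat_of_succ_le h hmn
    have hstep : ∀ n, α n ≠ p - 1 → D (n+1) ≤ D n - 1 := by
      intro n hne
      rw [hDsucc n, pow_succ]
      have h1 : ((α n : ℤ) + 1) ≤ (p:ℤ) - 1 := by
        have := hα n; omega
      have h2 := mul_le_mul_of_nonneg_right h1 (hpow_pos n).le
      have h3 := hpow_pos n
      nlinarith
    have hdown0 : ∀ s : ℕ, ∃ M, D M ≤ D 0 - s := by
      intro s; induction s with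
      | zero => exact ⟨0, by simp⟩
      | succ s ih =>
        obtain ⟨M, hM⟩ := ih
        obtain ⟨n, hn1, hn2⟩ := hnep M
        refine ⟨n+1, ?_⟩
        have ha1 := hstep n hn2
        have ha2 := hmono M n hn1
        push_cast
        omega
    have hdown : ∀ x : ℤ, ∃ M, ∀ n, M ≤ n → D n < x := by
      intro x
      obtain ⟨M, hM⟩ := hdown0 (D 0 - x + 1).toNat
      refine ⟨M, fun n hn => ?_⟩
      have h1 := hmono M n hn
      have h2 := Int.self_le_toNat (D 0 - x + 1)
      omega
    have hC0lt : ∀ n, C0 n + 1 ≤ p ^ n := by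
      intro n; induction n with
      | zero => simp [hC0]
      | succ n ih =>
        rw [hC0succ n, pow_succ']
        have h2 : α n * p ^ n ≤ (p-1) * p^n := Nat.mul_le_mul_right _ (by have := hα n; omega)
        have h3 : (p - 1) * p ^ n = p * p ^ n - p ^ n := Nat.sub_one_mul p (p^n)
        have h4 : p ^ n ≤ p * p ^ n := Nat.le_mul_of_pos_left _ (by omega)
        omega
    obtain ⟨M1, hM1⟩ := hdown v
    refine ⟨M1 + (-v).toNat, fun n hn i hi => ?_⟩
    rw [HahnSeries.mem_support] at hi
    by_contra hneg
    push_neg at hneg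
    have key : ∀ m, M1 + (-v).toNat ≤ m → ∀ j : ℤ, j < 0 → (y m).coeff j = 0 := by
      intro m hm j hj
      by_cases hd : ((p:ℤ)^m ∣ j)
      · rw [h3 m j hd]
        apply hv
        obtain ⟨q, hq⟩ := hd
        have hq1 : q ≤ -1 := by
          rcases le_or_gt q (-1) with h | h
          · exact h
          · exfalso
            have h0 : 0 ≤ q := by omega
            have : 0 ≤ j := hq ▸ mul_nonneg (hpow_pos m).le h0
            omega
        have hplt : (m:ℤ) < (p:ℤ)^m := by exact_mod_cast Nat.lt_pow_self (n := m) (by omega)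
        have hvm : -v ≤ (m:ℤ) := by
          have := Int.self_le_toNat (-v)
          omega
        have hC0m : (C0 m : ℤ) < (p:ℤ)^m := by exact_mod_cast hC0lt m
        rcases eq_or_lt_of_le hq1 with hq2 | hq2
        · have hDm := hM1 m (by omega)
          have hj1 : j = -(p:ℤ)^m := by rw [hq, hq2]; ring
          rw [hj1]
          simp only [hD] at hDm
          omega
        · have hj2 : j ≤ -2 * (p:ℤ)^m := by
            have h5 := hpow_pos m
            have h6 : q ≤ -2 := by omega
            calc j = (p:ℤ)^m * q := hq
              _ ≤ (p:ℤ)^m * (-2) := by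
                  exact mul_le_mul_of_nonneg_left h6 h5.le
              _ = -2 * (p:ℤ)^m := by ring
          omega
      · exact hy0 m j hd
    have h0 := hco n i
    rw [key n hn i hneg, key (n+1) (by omega) _ (by
      have : (0:ℤ) ≤ ((α n * p ^ n : ℕ) : ℤ) := Int.natCast_nonneg _
      omega)] at h0
    simp only [sub_zero, zero_sub, neg_eq_zero] at h0
    exact hi h0
  · rintro ⟨N, hN⟩
    have ha1 : ∀ n, ∀ i ∈ (a n).support, ((p : ℤ) ^ n) ∣ i := fun n i hi => (ha n i hi).1
    rcases hadm with hall | hne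
    · apply construct p α a ha1 (fun n x => max N (x+1))
      intro n m j hnm hB
      have hB' : max N (j.toNat + 1) ≤ m := hB
      have hCz : (∑ t ∈ Finset.Ico n m, α t * p ^ t) = 0 := by
        apply Finset.sum_eq_zero; intro t _; rw [hall t]; ring
      rw [hCz, Nat.cast_zero, sub_zero]
      by_contra hne2
      have hmem : j ∈ (a m).support := hne2
      have h1 := (ha m j hmem).2
      have h2 := (ha m j hmem).1
      have h3 : 0 ≤ j := hN m (by omega) j hmem
      have hj0 : j ≠ 0 := by
        intro h
        apply h1
        rw [h, hall m]
        simp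
      have h4 : (p:ℤ)^m ≤ j := Int.le_of_dvd (by omega) h2
      have h5 : (m:ℤ) < (p:ℤ)^m := by exact_mod_cast Nat.lt_pow_self (n := m) (by omega)
      have h6 := Int.self_le_toNat j
      omega
    · push_neg at hne
      obtain ⟨h0, -⟩ := hne
      set C0 : ℕ → ℕ := fun n => ∑ t ∈ Finset.range n, α t * p ^ t with hC0
      have hC0mono : Monotone C0 := by
        intro m n hmn
        exact Finset.sum_le_sum_of_subset (Finset.range_subset_range.2 hmn)
      have hunb : ∀ x : ℕ, ∃ M, x < C0 M := by
        intro x; induction x with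
        | zero =>
          obtain ⟨m, -, hm2⟩ := h0 0
          refine ⟨m+1, ?_⟩
          have h1 : C0 (m+1) = C0 m + α m * p ^ m := by simp [hC0, Finset.sum_range_succ]
          have h3 : 0 < α m * p ^ m := Nat.mul_pos (by omega) (pow_pos (by omega) m)
          omega
        | succ x ih =>
          obtain ⟨M, hM⟩ := ih
          obtain ⟨m, hm1, hm2⟩ := h0 M
          refine ⟨m+1, ?_⟩
          have h1 : C0 M ≤ C0 m := hC0mono hm1
          have h2 : C0 (m+1) = C0 m + α m * p ^ m := by simp [hC0, Finset.sum_range_succ]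
          have h3 : 0 < α m * p ^ m := Nat.mul_pos (by omega) (pow_pos (by omega) m)
          omega
      choose g hg using hunb
      apply construct p α a ha1 (fun n x => max (max N n) (g (x + C0 n)))
      intro n m j hnm hB
      have hB' : max (max N n) (g (j.toNat + C0 n)) ≤ m := hB
      have h1 : j.toNat + C0 n < C0 m := lt_of_lt_of_le (hg _) (hC0mono (by omega))
      have h2 : C0 m = C0 n + (∑ t ∈ Finset.Ico n m, α t * p ^ t) := by
        simp only [hC0]
        rw [Finset.range_eq_Ico, Finset.range_eq_Ico]
        exact (Finset.sum_Ico_consecutive _ (Nat.zero_le n) hnm).symm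
      by_contra hne2
      have hmem : j - ((∑ t ∈ Finset.Ico n m, α t * p ^ t : ℕ) : ℤ) ∈ (a m).support := hne2
      have h3 : 0 ≤ j - ((∑ t ∈ Finset.Ico n m, α t * p ^ t : ℕ) : ℤ) := hN m (by omega) _ hmem
      have h6 := Int.self_le_toNat j
      omega
end

section
/- Let k be an algebraically closed field of characteristic p > 0 and let α = (α_n) be an admissible digit sequence. Model the field k((t⁻¹)) as the Laurent series field k((s)) via t = s⁻¹, so that the support of an element as a series in t is the negative of its support as a series in s. Let (a_n)_{n≥0} be a sequence with a_n ∈ k((s)) and supp_s(a_n) ⊆ p^nℤ \ (−α_n p^n + p^{n+1}ℤ) for all n. Then the following are equivalent: (i) there exist y_n ∈ k((s)) with supp_s(y_n) ⊆ p^nℤ such that s^{α_n p^n}·a_n = s^{α_n p^n}·y_n − y_{n+1} for all n ≥ 0 (the equation a_n = y_n − t^{α_n p^n} y_{n+1} rewritten in the variable s); (ii) there exists N such that for all n ≥ N one has supp_s(a_n) ⊆ ℤ_{>0}, i.e., a_n ∈ s·k⟦s⟧ (equivalently a_n ∈ t⁻¹·k⟦t⁻¹⟧). -/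
/-- The element `s` of `k((s))` (modelling `t⁻¹ ∈ k((t⁻¹))`). -/
noncomputable def ss (k : Type*) [Field k] : LaurentSeries k := HahnSeries.single 1 1

/-! ### Auxiliary material -/

namespace TwistedRlimAux

/-- Partial sums `γ n = ∑_{m < n} α m * p ^ m` of the `p`-adic digit expansion. -/
def gam (p : ℕ) (α : ℕ → ℕ) (n : ℕ) : ℕ := ∑ m ∈ Finset.range n, α m * p ^ m

lemma gam_succ (p : ℕ) (α : ℕ → ℕ) (n : ℕ) :
    gam p α (n + 1) = gam p α n + α n * p ^ n :=
  Finset.sum_range_succ _ _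

lemma gam_mono (p : ℕ) (α : ℕ → ℕ) {l m : ℕ} (h : l ≤ m) :
    gam p α l ≤ gam p α m :=
  Finset.sum_le_sum_of_subset (Finset.range_subset_range.2 h)

lemma dvd_gam_sub (p : ℕ) (α : ℕ → ℕ) {l m : ℕ} (h : l ≤ m) :
    ((p : ℤ)) ^ l ∣ (gam p α m : ℤ) - (gam p α l : ℤ) := by
  induction m, h using Nat.le_induction with
  | base => simp
  | succ m hm ih =>
    rw [gam_succ]
    push_cast
    have h2 : (p : ℤ) ^ l ∣ (α m : ℤ) * (p : ℤ) ^ m :=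
      Dvd.dvd.mul_left (pow_dvd_pow _ hm) _
    have h3 := dvd_add ih h2
    convert h3 using 1
    exacts [rfl, by ring]

lemma gam_lt (p : ℕ) (α : ℕ → ℕ) (hα : ∀ n, α n < p) (hp : 0 < p) (n : ℕ) :
    gam p α n < p ^ n := by
  induction n with
  | zero => simp [gam]
  | succ n ih =>
    rw [gam_succ]
    calc gam p α n + α n * p ^ n < p ^ n + α n * p ^ n := Nat.add_lt_add_right ih _
      _ = (1 + α n) * p ^ n := by ring
      _ ≤ p * p ^ n := Nat.mul_le_mul_right _ (by have := hα n; omega)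
      _ = p ^ (n + 1) := by ring

lemma ss_pow (k : Type*) [Field k] (c : ℕ) :
    (ss k) ^ c = HahnSeries.single (c : ℤ) 1 := by
  rw [ss, HahnSeries.single_pow]
  simp

lemma singleMul_coeff {k : Type*} [Field k] (c j : ℤ) (x : LaurentSeries k) :
    (HahnSeries.single c (1 : k) * x).coeff j = x.coeff (j - c) := by
  have h := HahnSeries.coeff_single_mul_add (r := (1 : k)) (x := x) (a := j - c) (b := c)
  simpa using h

lemma sumMul_coeff {k : Type*} [Field k] (s : Finset ℕ) (F : ℕ → LaurentSeries k) (j : ℤ) :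
    (∑ m ∈ s, F m).coeff j = ∑ m ∈ s, (F m).coeff j :=
  map_sum (HahnSeries.coeff.addMonoidHom j) _ _

/-- The key disjointness lemma: if the first `l` congruence conditions hold at `i` but the
`l`-th fails, then `a m` has zero coefficient at `i + γ m` for every `m ≠ l`. -/
lemma vanish {k : Type*} [Field k] {p : ℕ} {α : ℕ → ℕ} {a : ℕ → LaurentSeries k}
    (ha : ∀ n, ∀ i ∈ (a n).support,
      ((p : ℤ) ^ n) ∣ i ∧ ¬ ((p : ℤ) ^ (n + 1) ∣ i + (α n * p ^ n : ℕ)))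
    {i : ℤ} {l : ℕ}
    (hl1 : ∀ j < l, (p : ℤ) ^ (j + 1) ∣ i + (gam p α (j + 1) : ℤ))
    (hl2 : ¬ (p : ℤ) ^ (l + 1) ∣ i + (gam p α (l + 1) : ℤ))
    {m : ℕ} (hm : m ≠ l) :
    (a m).coeff (i + (gam p α m : ℤ)) = 0 := by
  by_contra hc
  have hmem : (i + (gam p α m : ℤ)) ∈ (a m).support := (HahnSeries.mem_support _ _).2 hc
  obtain ⟨hd1, hd2⟩ := ha m _ hmem
  rcases lt_or_gt_of_ne hm with hlt | hgt
  · apply hd2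
    have h := hl1 m hlt
    have e : i + (gam p α (m + 1) : ℤ) =
        i + (gam p α m : ℤ) + ((α m * p ^ m : ℕ) : ℤ) := by
      rw [gam_succ]; push_cast; ring
    rw [e] at h
    exact h
  · apply hl2
    have h1 : (p : ℤ) ^ (l + 1) ∣ i + (gam p α m : ℤ) :=
      dvd_trans (pow_dvd_pow _ hgt) hd1
    have h2 := dvd_gam_sub p α (show l + 1 ≤ m from hgt)
    have e : i + (gam p α (l + 1) : ℤ) =
        (i + (gam p α m : ℤ)) - ((gam p α m : ℤ) - (gam p α (l + 1) : ℤ)) := by ring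
    rw [e]
    exact dvd_sub h1 h2

open Classical in
/-- The coefficient function of the "infinite sum" `∑_{m ≥ 1} s^{-γ m} a m`. -/
noncomputable def zfun (p : ℕ) (α : ℕ → ℕ) {k : Type*} [Field k]
    (a : ℕ → LaurentSeries k) (i : ℤ) : k :=
  if h : ∃ m : ℕ, ¬ ((p : ℤ) ^ (m + 1) ∣ i + (gam p α (m + 1) : ℤ)) then
    (if Nat.find h = 0 then 0 else (a (Nat.find h)).coeff (i + (gam p α (Nat.find h) : ℤ)))
  else 0

lemma zfun_ne {k : Type*} [Field k] (p : ℕ) (α : ℕ → ℕ) (a : ℕ → LaurentSeries k)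
    {i : ℤ} (h : zfun p α a i ≠ 0) :
    ∃ l : ℕ, 1 ≤ l ∧ (a l).coeff (i + (gam p α l : ℤ)) ≠ 0 := by
  by_cases hEx : ∃ m : ℕ, ¬ ((p : ℤ) ^ (m + 1) ∣ i + (gam p α (m + 1) : ℤ))
  · rw [zfun, dif_pos hEx] at h
    by_cases h0 : Nat.find hEx = 0
    · rw [if_pos h0] at h; exact absurd rfl h
    · rw [if_neg h0] at h; exact ⟨Nat.find hEx, by omega, h⟩
  · rw [zfun, dif_neg hEx] at h; exact absurd rfl h

lemma zfun_eval {k : Type*} [Field k] (p : ℕ) (α : ℕ → ℕ) (a : ℕ → LaurentSeries k)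
    (ha : ∀ n, ∀ i ∈ (a n).support,
      ((p : ℤ) ^ n) ∣ i ∧ ¬ ((p : ℤ) ^ (n + 1) ∣ i + (α n * p ^ n : ℕ)))
    {i : ℤ} {n : ℕ}
    (hnd : ¬ ((p : ℤ) ^ (n + 1) ∣ i + (gam p α (n + 1) : ℤ))) :
    zfun p α a i = ∑ m ∈ Finset.Icc 1 n, (a m).coeff (i + (gam p α m : ℤ)) := by
  have hEx : ∃ m : ℕ, ¬ ((p : ℤ) ^ (m + 1) ∣ i + (gam p α (m + 1) : ℤ)) := ⟨n, hnd⟩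
  have hlmin : ∀ j' < Nat.find hEx,
      (p : ℤ) ^ (j' + 1) ∣ i + (gam p α (j' + 1) : ℤ) :=
    fun j' hj' => not_not.mp (Nat.find_min hEx hj')
  have hlspec := Nat.find_spec hEx
  have hln : Nat.find hEx ≤ n := Nat.find_le hnd
  rw [zfun, dif_pos hEx]
  by_cases hl0 : Nat.find hEx = 0
  · rw [if_pos hl0]
    symm
    apply Finset.sum_eq_zero
    intro m hm
    have hm1 := (Finset.mem_Icc.1 hm).1
    exact vanish ha hlmin hlspec (by omega)
  · rw [if_neg hl0]
    symm
    exact Finset.sum_eq_single_of_mem _ (Finset.mem_Icc.2 ⟨by omega, hln⟩)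
      (fun b _ hbl => vanish ha hlmin hlspec hbl)

end TwistedRlimAux

open TwistedRlimAux

/-- **Triviality criterion over `k((t⁻¹))` (Lemma 5.9 c)).**
Model `k((t⁻¹))` as `k((s))` with `t = s⁻¹`.  Let `α` be an admissible digit sequence and
`(a n)` a sequence in `k((s))` with `supp_s(aₙ) ⊆ pⁿℤ \ (−αₙ pⁿ + p^{n+1}ℤ)`.  Then
there exist `yₙ ∈ k((s))` with `supp_s(yₙ) ⊆ pⁿℤ` satisfying
`s^{αₙ pⁿ}·aₙ = s^{αₙ pⁿ}·yₙ − y_{n+1}` for all `n` (the equation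
`aₙ = yₙ − t^{αₙ pⁿ} y_{n+1}` rewritten in `s`), iff `aₙ ∈ s·k⟦s⟧` for all large `n`. -/
theorem twisted_rlim_trivial_iff_laurent_series_at_infinity
    (k : Type*) [Field k] [IsAlgClosed k] (p : ℕ) [CharP k p] (hp : 0 < p)
    (α : ℕ → ℕ) (hα : ∀ n, α n < p) (hadm : AdmissibleDigits p α)
    (a : ℕ → LaurentSeries k)
    (ha : ∀ n, ∀ i ∈ (a n).support,
      ((p : ℤ) ^ n) ∣ i ∧ ¬ ((p : ℤ) ^ (n + 1) ∣ i + (α n * p ^ n : ℕ))) :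
    (∃ y : ℕ → LaurentSeries k,
        (∀ n, ∀ i ∈ (y n).support, ((p : ℤ) ^ n) ∣ i) ∧
        ∀ n, (ss k) ^ (α n * p ^ n) * a n =
          (ss k) ^ (α n * p ^ n) * y n - y (n + 1))
      ↔ (∃ N, ∀ n, N ≤ n → ∀ i ∈ (a n).support, 0 < i) := by
  classical
  have hprime : p.Prime := CharP.char_prime_of_ne_zero k (by omega)
  have hp2 : 2 ≤ p := hprime.two_le
  constructor
  · -- forward direction
    rintro ⟨y, hy, heq⟩
    have hstep : ∀ n, y (n + 1) =
        HahnSeries.single (((α n * p ^ n : ℕ)) : ℤ) 1 * (y n - a n) := by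
      intro n
      have h := heq n
      rw [ss_pow] at h
      linear_combination h
    have husupp : ∀ n i, ¬ ((p : ℤ) ^ (n + 1) ∣ i + ((α n * p ^ n : ℕ) : ℤ)) →
        (y n - a n).coeff i = 0 := by
      intro n i hnd
      by_contra hc
      apply hnd
      have h1 : (y (n + 1)).coeff (i + ((α n * p ^ n : ℕ) : ℤ)) = (y n - a n).coeff i := by
        rw [hstep n, singleMul_coeff, add_sub_cancel_right]
      have hmem : (i + ((α n * p ^ n : ℕ) : ℤ)) ∈ (y (n + 1)).support :=
        (HahnSeries.mem_support _ _).2 (by rw [h1]; exact hc)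
      exact hy (n + 1) _ hmem
    have hQ : ∀ n j, (y n - a n).coeff j =
        (y 0 - a 0).coeff (j - (gam p α n : ℤ))
          - ∑ m ∈ Finset.Icc 1 n, (a m).coeff (j - (gam p α n : ℤ) + (gam p α m : ℤ)) := by
      intro n
      induction n with
      | zero =>
        intro j
        rw [Finset.Icc_eq_empty (by omega), Finset.sum_empty]
        simp [gam]
      | succ n ih =>
        intro j
        rw [hstep n, HahnSeries.coeff_sub, singleMul_coeff, ih,
          Finset.sum_Icc_succ_top (by omega : 1 ≤ n + 1)]
        have e1 : j - ((α n * p ^ n : ℕ) : ℤ) - (gam p α n : ℤ)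
            = j - (gam p α (n + 1) : ℤ) := by
          rw [gam_succ]; push_cast; ring
        have e3 : j - (gam p α (n + 1) : ℤ) + (gam p α (n + 1) : ℤ) = j := by ring
        simp only [e1, e3]
        ring
    have hkeyF : ∀ m, 1 ≤ m → ∀ i ∈ (a m).support,
        (y 0 - a 0).coeff (i - (gam p α m : ℤ)) = (a m).coeff i := by
      intro m hm i hi
      obtain ⟨hd1, hd2⟩ := ha m i hi
      have h0 : (y m - a m).coeff i = 0 := husupp m i hd2
      have hQm := hQ m i
      rw [h0] at hQm
      have hl1 : ∀ j' < m, (p : ℤ) ^ (j' + 1) ∣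
          (i - (gam p α m : ℤ)) + (gam p α (j' + 1) : ℤ) := by
        intro j' hj'
        have d1 : (p : ℤ) ^ (j' + 1) ∣ i :=
          dvd_trans (pow_dvd_pow _ (by omega)) hd1
        have d2 := dvd_gam_sub p α (show j' + 1 ≤ m by omega)
        have e : (i - (gam p α m : ℤ)) + (gam p α (j' + 1) : ℤ)
            = i - ((gam p α m : ℤ) - (gam p α (j' + 1) : ℤ)) := by ring
        rw [e]
        exact dvd_sub d1 d2
      have hl2 : ¬ (p : ℤ) ^ (m + 1) ∣
          (i - (gam p α m : ℤ)) + (gam p α (m + 1) : ℤ) := by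
        have e : (i - (gam p α m : ℤ)) + (gam p α (m + 1) : ℤ)
            = i + ((α m * p ^ m : ℕ) : ℤ) := by
          rw [gam_succ]; push_cast; ring
        rw [e]
        exact hd2
      have hsum : ∑ l ∈ Finset.Icc 1 m,
          (a l).coeff (i - (gam p α m : ℤ) + (gam p α l : ℤ)) = (a m).coeff i := by
        rw [Finset.sum_eq_single_of_mem m (Finset.mem_Icc.2 ⟨hm, le_refl m⟩)
          (fun b _ hbm => vanish ha hl1 hl2 hbm)]
        congr 1
        ring
      rw [hsum] at hQm
      exact sub_eq_zero.mp hQm.symm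
    by_contra hcon
    push_neg at hcon
    have hne : (y 0 - a 0).support.Nonempty := by
      obtain ⟨n₀, hn₀, i₀, hi₀, hle₀⟩ := hcon 1
      exact ⟨i₀ - (gam p α n₀ : ℤ), (HahnSeries.mem_support _ _).2 (by
        rw [hkeyF n₀ hn₀ i₀ hi₀]
        exact (HahnSeries.mem_support _ _).1 hi₀)⟩
    set B := (y 0 - a 0).isWF_support.min hne with hBdef
    have hBle : ∀ i ∈ (y 0 - a 0).support, B ≤ i :=
      fun i hi => (y 0 - a 0).isWF_support.min_le hne hi
    rcases hadm with hz | hirr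
    · -- all digits vanish
      have hγ0 : ∀ n, (gam p α n : ℤ) = 0 := fun n => by simp [gam, hz]
      obtain ⟨n, hnM, i, hi, hile⟩ := hcon ((-B).toNat + 1)
      obtain ⟨hd1, hd2⟩ := ha n i hi
      have hi0 : i ≠ 0 := by
        intro h
        apply hd2
        rw [h, hz n]
        simp
      have hineg : i < 0 := lt_of_le_of_ne (hile) hi0
      have hpn : (p : ℤ) ^ n ≤ -i := Int.le_of_dvd (by omega) (dvd_neg.2 hd1)
      have hBi : B ≤ i := by
        apply hBle
        rw [HahnSeries.mem_support]
        have hk := hkeyF n (by omega) i hi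
        rw [hγ0 n, sub_zero] at hk
        rw [hk]
        exact (HahnSeries.mem_support _ _).1 hi
      have h1 : (n : ℤ) < (p : ℤ) ^ n := by
        exact_mod_cast Nat.lt_pow_self (n := n) (a := p) (by omega)
      have h2 : -B ≤ ((-B).toNat : ℤ) := Int.self_le_toNat _
      have h3 : (((-B).toNat : ℤ) + 1) ≤ (n : ℤ) := by exact_mod_cast hnM
      linarith
    · -- irrational case
      push_neg at hirr
      obtain ⟨hne0, -⟩ := hirr
      obtain ⟨n₁, hn₁, hα₁⟩ := hne0 ((-B).toNat)
      obtain ⟨n, hn, i, hi, hile⟩ := hcon (n₁ + 1)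
      have hBi : B ≤ i - (gam p α n : ℤ) := hBle _ ((HahnSeries.mem_support _ _).2 (by
        rw [hkeyF n (by omega) i hi]
        exact (HahnSeries.mem_support _ _).1 hi))
      have hγn : p ^ n₁ ≤ gam p α n := by
        calc p ^ n₁ = 1 * p ^ n₁ := (one_mul _).symm
          _ ≤ α n₁ * p ^ n₁ := Nat.mul_le_mul_right _ (by omega)
          _ ≤ gam p α (n₁ + 1) := by rw [gam_succ]; omega
          _ ≤ gam p α n := gam_mono p α (by omega)
      have h1 : (n₁ : ℤ) < (p : ℤ) ^ n₁ := by
        exact_mod_cast Nat.lt_pow_self (n := n₁) (a := p) (by omega)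
      have h2 : -B ≤ ((-B).toNat : ℤ) := Int.self_le_toNat _
      have h3 : ((-B).toNat : ℤ) ≤ (n₁ : ℤ) := by exact_mod_cast hn₁
      have h4 : ((p : ℤ)) ^ n₁ ≤ (gam p α n : ℤ) := by exact_mod_cast hγn
      have h5 : i ≤ 0 := hile
      linarith
  · -- backward direction
    rintro ⟨N, hN⟩
    -- lower bound for the support of `zfun`
    have hlow : ∃ B : ℤ, ∀ i : ℤ, zfun p α a i ≠ 0 → B ≤ i := by
      set T : Finset ℤ :=
        insert 1 ((Finset.range N).image fun l => (a l).order - (gam p α l : ℤ)) with hT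
      have hTne : T.Nonempty := ⟨1, Finset.mem_insert_self _ _⟩
      refine ⟨T.min' hTne, fun i hfi => ?_⟩
      obtain ⟨l, hl1, hlc⟩ := zfun_ne p α a hfi
      by_cases hlN : l < N
      · have hmemT : (a l).order - (gam p α l : ℤ) ∈ T :=
          Finset.mem_insert_of_mem (Finset.mem_image.2 ⟨l, Finset.mem_range.2 hlN, rfl⟩)
        have ho := HahnSeries.order_le_of_coeff_ne_zero hlc
        have := T.min'_le _ hmemT
        omega
      · have hmem : (i + (gam p α l : ℤ)) ∈ (a l).support :=
          (HahnSeries.mem_support _ _).2 hlc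
        have hpos : 0 < i + (gam p α l : ℤ) := hN l (by omega) _ hmem
        have hdvd : (p : ℤ) ^ l ∣ i + (gam p α l : ℤ) := (ha l _ hmem).1
        have h1 : (p : ℤ) ^ l ≤ i + (gam p α l : ℤ) := Int.le_of_dvd hpos hdvd
        have h2 : (gam p α l : ℤ) < (p : ℤ) ^ l := by
          exact_mod_cast gam_lt p α hα (by omega) l
        have hT1 : T.min' hTne ≤ 1 := T.min'_le _ (Finset.mem_insert_self _ _)
        omega
    obtain ⟨B, hB⟩ := hlow
    have hpwo : (Function.support (zfun p α a)).IsPWO :=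
      Set.IsWF.isPWO (BddBelow.wellFoundedOn_lt ⟨B, fun i hi => hB i hi⟩)
    obtain ⟨z, hzc⟩ : ∃ z : LaurentSeries k, ∀ i, z.coeff i = zfun p α a i :=
      ⟨⟨_, hpwo⟩, fun _ => rfl⟩
    obtain ⟨u, hucoeff⟩ : ∃ u : ℕ → LaurentSeries k, ∀ n j, (u n).coeff j =
        zfun p α a (j - (gam p α n : ℤ))
          - ∑ m ∈ Finset.Icc 1 n, (a m).coeff (j - (gam p α n : ℤ) + (gam p α m : ℤ)) := by
      refine ⟨fun n => HahnSeries.single ((gam p α n : ℤ)) 1 * z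
        - ∑ m ∈ Finset.Icc 1 n,
            HahnSeries.single ((gam p α n : ℤ) - (gam p α m : ℤ)) 1 * a m,
        fun n j => ?_⟩
      rw [HahnSeries.coeff_sub, singleMul_coeff, sumMul_coeff, hzc]
      congr 1
      refine Finset.sum_congr rfl fun m _ => ?_
      rw [singleMul_coeff]
      congr 1
      ring
    have huzero : ∀ n j, ¬ ((p : ℤ) ^ (n + 1) ∣ j + ((α n * p ^ n : ℕ) : ℤ)) →
        (u n).coeff j = 0 := by
      intro n j hnd
      have e : (j - (gam p α n : ℤ)) + (gam p α (n + 1) : ℤ)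
          = j + ((α n * p ^ n : ℕ) : ℤ) := by
        rw [gam_succ]; push_cast; ring
      have hnd' : ¬ ((p : ℤ) ^ (n + 1) ∣ (j - (gam p α n : ℤ)) + (gam p α (n + 1) : ℤ)) := by
        rw [e]; exact hnd
      rw [hucoeff, zfun_eval p α a ha hnd', sub_self]
    refine ⟨fun n => a n + u n, ?_, ?_⟩
    · intro n i hi
      rw [HahnSeries.mem_support, HahnSeries.coeff_add] at hi
      by_cases hai : (a n).coeff i = 0
      · have hui : (u n).coeff i ≠ 0 := by
          intro h
          apply hi
          rw [hai, h, add_zero]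
        have hdvd : (p : ℤ) ^ (n + 1) ∣ i + ((α n * p ^ n : ℕ) : ℤ) := by
          by_contra hnd
          exact hui (huzero n i hnd)
        have h1 : (p : ℤ) ^ n ∣ i + ((α n * p ^ n : ℕ) : ℤ) :=
          dvd_trans (pow_dvd_pow _ (by omega)) hdvd
        have h2 : (p : ℤ) ^ n ∣ ((α n * p ^ n : ℕ) : ℤ) := by
          push_cast
          exact dvd_mul_left _ _
        have h3 := dvd_sub h1 h2
        simpa using h3
      · exact (ha n i ((HahnSeries.mem_support _ _).2 hai)).1
    · intro n
      rw [ss_pow]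
      have hkey : a (n + 1) + u (n + 1) =
          HahnSeries.single (((α n * p ^ n : ℕ)) : ℤ) 1 * u n := by
        ext j
        rw [HahnSeries.coeff_add, singleMul_coeff, hucoeff, hucoeff,
          Finset.sum_Icc_succ_top (by omega : 1 ≤ n + 1)]
        have e1 : j - ((α n * p ^ n : ℕ) : ℤ) - (gam p α n : ℤ)
            = j - (gam p α (n + 1) : ℤ) := by
          rw [gam_succ]; push_cast; ring
        have e3 : j - (gam p α (n + 1) : ℤ) + (gam p α (n + 1) : ℤ) = j := by ring
        simp only [e1, e3]
        ring
      linear_combination hkey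
end

section
/- Let k be an algebraically closed field of characteristic p > 0 and let α = (α_n) be an admissible digit sequence. Let (a_n)_{n≥0} be a sequence of Laurent polynomials a_n ∈ k[t,t⁻¹] with supp(a_n) ⊆ p^nℤ \ (α_n p^n + p^{n+1}ℤ) for all n. Then the following are equivalent: (i) there exist Laurent polynomials y_n ∈ k[t,t⁻¹] with supp(y_n) ⊆ p^nℤ such that a_n = y_n − t^{α_n p^n}·y_{n+1} for all n; (ii) there exist y_n ∈ k((t)) with supp(y_n) ⊆ p^nℤ such that a_n = y_n − t^{α_n p^n}·y_{n+1} for all n, AND there exist z_n ∈ k((s)) with supp_s(z_n) ⊆ p^nℤ such that s^{α_n p^n}·ι(a_n) = s^{α_n p^n}·z_n − z_{n+1} for all n; (iii) there exists N such that a_n = 0 for all n ≥ N. -/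
namespace TwistedAux

open HahnSeries

variable {k : Type*} [Field k]

/-- partial sums of digits: `Dd p α m n = ∑_{m ≤ l < n} α l * p^l`. -/
def Dd (p : ℕ) (α : ℕ → ℕ) (m n : ℕ) : ℕ := ∑ l ∈ Finset.Ico m n, α l * p ^ l

lemma Dd_self (p : ℕ) (α : ℕ → ℕ) (n : ℕ) : Dd p α n n = 0 := by
  simp [Dd]

lemma Dd_bot (p : ℕ) (α : ℕ → ℕ) {m n : ℕ} (h : m < n) :
    Dd p α m n = α m * p ^ m + Dd p α (m + 1) n := by
  rw [Dd, Dd, Finset.sum_eq_sum_Ico_succ_bot h]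

lemma Dd_split (p : ℕ) (α : ℕ → ℕ) {m r n : ℕ} (h1 : m ≤ r) (h2 : r ≤ n) :
    Dd p α m r + Dd p α r n = Dd p α m n := by
  rw [Dd, Dd, Dd, Finset.sum_Ico_consecutive _ h1 h2]

lemma dvd_Dd (p : ℕ) (α : ℕ → ℕ) {r m : ℕ} (h : r ≤ m) (n : ℕ) :
    ((p : ℤ) ^ r) ∣ (Dd p α m n : ℤ) := by
  have hn : p ^ r ∣ Dd p α m n := by
    apply Finset.dvd_sum
    intro l hl
    exact Dvd.dvd.mul_left (pow_dvd_pow p (le_trans h (Finset.mem_Ico.mp hl).1)) (α l)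
  have := Int.natCast_dvd_natCast.mpr hn
  simpa using this

lemma tt_pow_eq (e : ℕ) : (tt k) ^ e = HahnSeries.single (e : ℤ) (1 : k) := by
  rw [tt, HahnSeries.single_pow]
  simp

lemma single_one_mul_coeff (v j : ℤ) (x : LaurentSeries k) :
    (HahnSeries.single v (1 : k) * x).coeff j = x.coeff (j - v) := by
  have h := HahnSeries.coeff_single_mul_add (R := k) (r := (1 : k)) (x := x) (a := j - v) (b := v)
  rw [show j - v + v = j by ring] at h
  simpa using h

lemma tt_pow_mul_coeff (e : ℕ) (x : LaurentSeries k) (j : ℤ) :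
    ((tt k) ^ e * x).coeff j = x.coeff (j - (e : ℤ)) := by
  rw [tt_pow_eq, single_one_mul_coeff]


lemma sum_coeff (s : Finset ℕ) (f : ℕ → LaurentSeries k) (j : ℤ) :
    (∑ m ∈ s, f m).coeff j = ∑ m ∈ s, (f m).coeff j := by
  induction s using Finset.cons_induction with
  | empty => simp
  | cons q s hq ih => rw [Finset.sum_cons, Finset.sum_cons, HahnSeries.coeff_add, ih]

section Main

variable (p : ℕ) (α : ℕ → ℕ) (a a' : ℕ → LaurentSeries k)

/-- key downward induction on the `k((t))` side -/
lemma lemY (y : ℕ → LaurentSeries k)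
    (ha : ∀ n, ∀ i ∈ (a n).support,
      ((p : ℤ) ^ n) ∣ i ∧ ¬ ((p : ℤ) ^ (n + 1) ∣ i - (α n * p ^ n : ℕ)))
    (hysupp : ∀ n, ∀ i ∈ (y n).support, ((p : ℤ) ^ n) ∣ i)
    (hrel : ∀ n, a n = y n - (tt k) ^ (α n * p ^ n) * y (n + 1)) :
    ∀ (j n : ℕ) (i : ℤ), i ∈ (a n).support → j ≤ n →
      (y (n - j)).coeff (i + (Dd p α (n - j) n : ℤ)) ≠ 0 := by
  have hc : ∀ (n : ℕ) (v : ℤ), (a n).coeff v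
      = (y n).coeff v - (y (n + 1)).coeff (v - ((α n * p ^ n : ℕ) : ℤ)) := by
    intro n v
    have h := congrArg (fun f : LaurentSeries k => f.coeff v) (hrel n)
    simpa [HahnSeries.coeff_sub, tt_pow_mul_coeff] using h
  intro j
  induction j with
  | zero =>
    intro n i hi _
    have hiz : (a n).coeff i ≠ 0 := (HahnSeries.mem_support _ _).mp hi
    have h2 : (y (n + 1)).coeff (i - ((α n * p ^ n : ℕ) : ℤ)) = 0 := by
      by_contra h
      exact (ha n i hi).2 (hysupp (n + 1) _ ((HahnSeries.mem_support _ _).mpr h))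
    have h3 := hc n i
    rw [h2, sub_zero] at h3
    rw [Nat.sub_zero, Dd_self]
    simpa using (h3 ▸ hiz)
  | succ j IH =>
    intro n i hi hj
    set m := n - (j + 1) with hm
    have hmn : m < n := by omega
    have hm1 : m + 1 = n - j := by omega
    have hdvd_i : ((p : ℤ) ^ (m + 1)) ∣ i :=
      dvd_trans (pow_dvd_pow _ (by omega)) (ha n i hi).1
    have hDsplit : (Dd p α m n : ℤ) = ((α m * p ^ m : ℕ) : ℤ) + (Dd p α (m + 1) n : ℤ) := by
      rw [Dd_bot p α hmn]; push_cast; ring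
    have harg : i + (Dd p α m n : ℤ) - ((α m * p ^ m : ℕ) : ℤ)
        = i + (Dd p α (m + 1) n : ℤ) := by rw [hDsplit]; ring
    have hzero : (a m).coeff (i + (Dd p α m n : ℤ)) = 0 := by
      by_contra h
      apply (ha m _ ((HahnSeries.mem_support _ _).mpr h)).2
      rw [harg]
      exact dvd_add hdvd_i (dvd_Dd p α le_rfl n)
    have h := hc m (i + (Dd p α m n : ℤ))
    rw [hzero, harg] at h
    have hEq : (y m).coeff (i + (Dd p α m n : ℤ))
        = (y (m + 1)).coeff (i + (Dd p α (m + 1) n : ℤ)) := sub_eq_zero.mp h.symm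
    have hIH := IH n i hi (by omega)
    rw [← hm1] at hIH
    rw [hEq]
    exact hIH

/-- key downward induction on the `k((s))` side -/
lemma lemZ (z : ℕ → LaurentSeries k)
    (ha : ∀ n, ∀ i ∈ (a n).support,
      ((p : ℤ) ^ n) ∣ i ∧ ¬ ((p : ℤ) ^ (n + 1) ∣ i - (α n * p ^ n : ℕ)))
    (hrev : ∀ n i, (a' n).coeff i = (a n).coeff (-i))
    (hzsupp : ∀ n, ∀ i ∈ (z n).support, ((p : ℤ) ^ n) ∣ i)
    (hrel : ∀ n, (tt k) ^ (α n * p ^ n) * a' n =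
      (tt k) ^ (α n * p ^ n) * z n - z (n + 1)) :
    ∀ (j n : ℕ) (i : ℤ), i ∈ (a n).support → j ≤ n →
      (z (n - j)).coeff (-(i + (Dd p α (n - j) n : ℤ))) ≠ 0 := by
  have hc : ∀ (n : ℕ) (u : ℤ), (a n).coeff (-u)
      = (z n).coeff u - (z (n + 1)).coeff (u + ((α n * p ^ n : ℕ) : ℤ)) := by
    intro n u
    have h := congrArg
      (fun f : LaurentSeries k => f.coeff (u + ((α n * p ^ n : ℕ) : ℤ))) (hrel n)
    simp only [HahnSeries.coeff_sub, tt_pow_mul_coeff] at h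
    rw [add_sub_cancel_right] at h
    rw [hrev n u] at h
    exact h
  intro j
  induction j with
  | zero =>
    intro n i hi _
    have hiz : (a n).coeff i ≠ 0 := (HahnSeries.mem_support _ _).mp hi
    have h2 : (z (n + 1)).coeff (-i + ((α n * p ^ n : ℕ) : ℤ)) = 0 := by
      by_contra h
      apply (ha n i hi).2
      have hd := hzsupp (n + 1) _ ((HahnSeries.mem_support _ _).mpr h)
      have : i - ((α n * p ^ n : ℕ) : ℤ) = -(-i + ((α n * p ^ n : ℕ) : ℤ)) := by ring
      rw [this]
      exact hd.neg_right
    have h3 := hc n (-i)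
    rw [h2, sub_zero, neg_neg] at h3
    rw [Nat.sub_zero, Dd_self]
    have he : -(i + ((0 : ℕ) : ℤ)) = -i := by simp
    rw [he, ← h3]
    exact hiz
  | succ j IH =>
    intro n i hi hj
    set m := n - (j + 1) with hm
    have hmn : m < n := by omega
    have hm1 : m + 1 = n - j := by omega
    have hdvd_i : ((p : ℤ) ^ (m + 1)) ∣ i :=
      dvd_trans (pow_dvd_pow _ (by omega)) (ha n i hi).1
    have hDsplit : (Dd p α m n : ℤ) = ((α m * p ^ m : ℕ) : ℤ) + (Dd p α (m + 1) n : ℤ) := by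
      rw [Dd_bot p α hmn]; push_cast; ring
    have harg : -(i + (Dd p α m n : ℤ)) + ((α m * p ^ m : ℕ) : ℤ)
        = -(i + (Dd p α (m + 1) n : ℤ)) := by rw [hDsplit]; ring
    have hzero : (a m).coeff (i + (Dd p α m n : ℤ)) = 0 := by
      by_contra h
      apply (ha m _ ((HahnSeries.mem_support _ _).mpr h)).2
      have : i + (Dd p α m n : ℤ) - ((α m * p ^ m : ℕ) : ℤ)
          = i + (Dd p α (m + 1) n : ℤ) := by rw [hDsplit]; ring
      rw [this]
      exact dvd_add hdvd_i (dvd_Dd p α le_rfl n)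
    have h := hc m (-(i + (Dd p α m n : ℤ)))
    rw [neg_neg, hzero, harg] at h
    have hEq : (z m).coeff (-(i + (Dd p α m n : ℤ)))
        = (z (m + 1)).coeff (-(i + (Dd p α (m + 1) n : ℤ))) := sub_eq_zero.mp h.symm
    have hIH := IH n i hi (by omega)
    rw [← hm1] at hIH
    rw [hEq]
    exact hIH

/-- injectivity of `n ↦ i_n + d_n` across levels -/
lemma key_inj
    (ha : ∀ n, ∀ i ∈ (a n).support,
      ((p : ℤ) ^ n) ∣ i ∧ ¬ ((p : ℤ) ^ (n + 1) ∣ i - (α n * p ^ n : ℕ))) :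
    ∀ (m n : ℕ) (i i' : ℤ), i ∈ (a m).support → i' ∈ (a n).support → m < n →
      i + (Dd p α 0 m : ℤ) ≠ i' + (Dd p α 0 n : ℤ) := by
  intro m n i i' hi hi' hmn heq
  apply (ha m i hi).2
  have e1 : (Dd p α 0 m : ℤ) + (Dd p α m n : ℤ) = (Dd p α 0 n : ℤ) := by
    have := Dd_split p α (Nat.zero_le m) (le_of_lt hmn)
    exact_mod_cast congrArg (fun x : ℕ => (x : ℤ)) this
  have e2 : (Dd p α m n : ℤ) = ((α m * p ^ m : ℕ) : ℤ) + (Dd p α (m + 1) n : ℤ) := by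
    rw [Dd_bot p α hmn]; push_cast; ring
  have e3 : i - ((α m * p ^ m : ℕ) : ℤ) = i' + (Dd p α (m + 1) n : ℤ) := by linarith
  rw [e3]
  exact dvd_add (dvd_trans (pow_dvd_pow _ (by omega)) (ha n i' hi').1)
    (dvd_Dd p α le_rfl n)

/-- deduce eventual vanishing from the coefficients landing in a finite set -/
lemma conclude
    (ha : ∀ n, ∀ i ∈ (a n).support,
      ((p : ℤ) ^ n) ∣ i ∧ ¬ ((p : ℤ) ^ (n + 1) ∣ i - (α n * p ^ n : ℕ)))
    (F : Set ℤ) (hF : F.Finite)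
    (hmem : ∀ (n : ℕ), ∀ i ∈ (a n).support, i + (Dd p α 0 n : ℤ) ∈ F) :
    ∃ N, ∀ n, N ≤ n → a n = 0 := by
  classical
  set S : Set ℕ := {n | a n ≠ 0} with hS
  set sel : ℕ → ℤ := fun n =>
    if h : (a n).support.Nonempty then h.some else 0 with hselp
  have hsel : ∀ n ∈ S, sel n ∈ (a n).support := by
    intro n hn
    have hne : (a n).support.Nonempty := HahnSeries.support_nonempty_iff.mpr hn
    rw [hselp]
    simp only [dif_pos hne]
    exact hne.some_mem
  have hfinS : S.Finite := by
    apply Set.Finite.of_finite_image (f := fun n => sel n + (Dd p α 0 n : ℤ))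
    · apply hF.subset
      rintro _ ⟨n, hn, rfl⟩
      exact hmem n _ (hsel n hn)
    · intro m hm n hn hmn2
      by_contra hne
      rcases lt_or_gt_of_ne hne with h | h
      · exact key_inj p α a ha m n _ _ (hsel m hm) (hsel n hn) h hmn2
      · exact key_inj p α a ha n m _ _ (hsel n hn) (hsel m hm) h hmn2.symm
  obtain ⟨N, hN⟩ := hfinS.bddAbove
  refine ⟨N + 1, fun n hn => ?_⟩
  by_contra h
  have h2 : n ≤ N := hN (Set.mem_setOf.mpr h)
  omega

/-- explicit solution `y` when the `a n` eventually vanish -/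
lemma constructY
    (hfin : ∀ n, (a n).support.Finite)
    (hdva : ∀ n, ∀ i ∈ (a n).support, ((p : ℤ) ^ n) ∣ i)
    (N : ℕ) (hN : ∀ n, N ≤ n → a n = 0) :
    ∃ y : ℕ → LaurentSeries k,
      (∀ n, (y n).support.Finite ∧ ∀ i ∈ (y n).support, ((p : ℤ) ^ n) ∣ i) ∧
      ∀ n, a n = y n - (tt k) ^ (α n * p ^ n) * y (n + 1) := by
  classical
  refine ⟨fun n => ∑ m ∈ Finset.Ico n N, (tt k) ^ (Dd p α n m) * a m, ?_, ?_⟩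
  · intro n
    have hterm : ∀ (j : ℤ),
        (∑ m ∈ Finset.Ico n N, (tt k) ^ (Dd p α n m) * a m).coeff j ≠ 0 →
        ∃ m ∈ Finset.Ico n N, (a m).coeff (j - (Dd p α n m : ℤ)) ≠ 0 := by
      intro j hj
      rw [sum_coeff] at hj
      obtain ⟨m, hm, hm2⟩ := Finset.exists_ne_zero_of_sum_ne_zero hj
      rw [tt_pow_mul_coeff] at hm2
      exact ⟨m, hm, hm2⟩
    constructor
    · apply Set.Finite.subset
        (Set.Finite.biUnion (Finset.Ico n N).finite_toSet
          (fun m _ => (hfin m).image (fun u => u + (Dd p α n m : ℤ))))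
      intro j hj
      obtain ⟨m, hm, hm2⟩ := hterm j hj
      refine Set.mem_biUnion hm ⟨j - (Dd p α n m : ℤ), ?_, by ring⟩
      exact (HahnSeries.mem_support _ _).mpr hm2
    · intro i hi
      obtain ⟨m, hm, hm2⟩ := hterm i ((HahnSeries.mem_support _ _).mp hi)
      have hnm : n ≤ m := (Finset.mem_Ico.mp hm).1
      have h1 : ((p : ℤ) ^ n) ∣ i - (Dd p α n m : ℤ) :=
        dvd_trans (pow_dvd_pow _ hnm) (hdva m _ ((HahnSeries.mem_support _ _).mpr hm2))
      have h2 : ((p : ℤ) ^ n) ∣ (Dd p α n m : ℤ) := dvd_Dd p α le_rfl m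
      have := dvd_add h1 h2
      simpa using this
  · intro n
    dsimp only
    by_cases hn : N ≤ n
    · rw [Finset.Ico_eq_empty (by omega), Finset.Ico_eq_empty (by omega)]
      simp [hN n hn]
    · have hn' : n < N := not_le.mp hn
      rw [Finset.sum_eq_sum_Ico_succ_bot hn', Finset.mul_sum]
      have hcong : ∀ m ∈ Finset.Ico (n + 1) N,
          (tt k) ^ (Dd p α n m) * a m
            = (tt k) ^ (α n * p ^ n) * ((tt k) ^ (Dd p α (n + 1) m) * a m) := by
        intro m hm
        have hlt : n < m := by
          have := (Finset.mem_Ico.mp hm).1; omega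
        rw [← mul_assoc, ← _root_.pow_add, ← Dd_bot p α hlt]
      rw [Finset.sum_congr rfl hcong, Dd_self, pow_zero, one_mul]
      ring

/-- explicit solution `z` when the `a n` eventually vanish -/
lemma constructZ
    (hrev : ∀ n i, (a' n).coeff i = (a n).coeff (-i))
    (hdva : ∀ n, ∀ i ∈ (a n).support, ((p : ℤ) ^ n) ∣ i)
    (N : ℕ) (hN : ∀ n, N ≤ n → a n = 0) :
    ∃ z : ℕ → LaurentSeries k,
      (∀ n, ∀ i ∈ (z n).support, ((p : ℤ) ^ n) ∣ i) ∧
      ∀ n, (tt k) ^ (α n * p ^ n) * a' n =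
        (tt k) ^ (α n * p ^ n) * z n - z (n + 1) := by
  classical
  have ha'0 : ∀ n, N ≤ n → a' n = 0 := by
    intro n hn
    ext i
    rw [hrev, hN n hn]
    simp
  refine ⟨fun n => ∑ m ∈ Finset.Ico n N,
    (HahnSeries.single (-(Dd p α n m : ℤ)) (1 : k)) * a' m, ?_, ?_⟩
  · intro n i hi
    have hi2 := (HahnSeries.mem_support _ _).mp hi
    rw [sum_coeff] at hi2
    obtain ⟨m, hm, hm2⟩ := Finset.exists_ne_zero_of_sum_ne_zero hi2
    rw [single_one_mul_coeff, hrev] at hm2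
    have hnm : n ≤ m := (Finset.mem_Ico.mp hm).1
    have h1 : ((p : ℤ) ^ n) ∣ -(i - (-(Dd p α n m : ℤ))) :=
      (dvd_trans (pow_dvd_pow _ hnm)
        (hdva m _ ((HahnSeries.mem_support _ _).mpr hm2)))
    have h2 : ((p : ℤ) ^ n) ∣ (Dd p α n m : ℤ) := dvd_Dd p α le_rfl m
    have h3 : i = -(-(i - (-(Dd p α n m : ℤ)))) + (-(Dd p α n m : ℤ)) := by ring
    rw [h3]
    exact dvd_add h1.neg_right h2.neg_right
  · intro n
    dsimp only
    by_cases hn : N ≤ n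
    · rw [Finset.Ico_eq_empty (by omega), Finset.Ico_eq_empty (by omega)]
      simp [ha'0 n hn]
    · have hn' : n < N := not_le.mp hn
      have hzn : (tt k) ^ (α n * p ^ n) * (∑ m ∈ Finset.Ico n N,
            (HahnSeries.single (-(Dd p α n m : ℤ)) (1 : k)) * a' m)
          = (tt k) ^ (α n * p ^ n) * a' n
            + ∑ m ∈ Finset.Ico (n + 1) N,
                (HahnSeries.single (-(Dd p α (n + 1) m : ℤ)) (1 : k)) * a' m := by
        rw [Finset.mul_sum, Finset.sum_eq_sum_Ico_succ_bot hn']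
        congr 1
        · rw [Dd_self]
          norm_num
        · apply Finset.sum_congr rfl
          intro m hm
          have hlt : n < m := by
            have := (Finset.mem_Ico.mp hm).1; omega
          rw [tt_pow_eq, ← mul_assoc, HahnSeries.single_mul_single, one_mul]
          have hvw : ((α n * p ^ n : ℕ) : ℤ) + (-(Dd p α n m : ℤ))
              = -(Dd p α (n + 1) m : ℤ) := by
            rw [Dd_bot p α hlt]; push_cast; ring
          rw [hvw]
      rw [hzn]
      ring

end Main

end TwistedAux

open TwistedAux in
/-- **Triviality criterion over `k[t,t⁻¹]` (Lemma 5.9 d)).**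
Let `α` be an admissible digit sequence, `(a n)` a sequence of Laurent polynomials
(elements of `k((t))` with finite support) with `supp(aₙ) ⊆ pⁿℤ \ (αₙ pⁿ + p^{n+1}ℤ)`,
and let `a' n = ι(a n)` be the image of `a n` in `k((s))` under `t ↦ s⁻¹`
(coefficientwise, `(a' n).coeff i = (a n).coeff (−i)`).  Then the following are
equivalent: (i) the class of `(a n)` is trivial over `k[t,t⁻¹]`; (ii) it is trivial
over both `k((t))` and `k((t⁻¹))`; (iii) `aₙ = 0` for all large `n`. -/
theorem twisted_rlim_trivial_iff_laurent_polynomials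
    (k : Type*) [Field k] [IsAlgClosed k] (p : ℕ) [CharP k p] (hp : 0 < p)
    (α : ℕ → ℕ) (hα : ∀ n, α n < p) (hadm : AdmissibleDigits p α)
    (a a' : ℕ → LaurentSeries k)
    (hfin : ∀ n, (a n).support.Finite)
    (hrev : ∀ n i, (a' n).coeff i = (a n).coeff (-i))
    (ha : ∀ n, ∀ i ∈ (a n).support,
      ((p : ℤ) ^ n) ∣ i ∧ ¬ ((p : ℤ) ^ (n + 1) ∣ i - (α n * p ^ n : ℕ))) :
    -- (i) ↔ (iii)
    ((∃ y : ℕ → LaurentSeries k,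
        (∀ n, (y n).support.Finite ∧ ∀ i ∈ (y n).support, ((p : ℤ) ^ n) ∣ i) ∧
        ∀ n, a n = y n - (tt k) ^ (α n * p ^ n) * y (n + 1))
      ↔ (∃ N, ∀ n, N ≤ n → a n = 0)) ∧
    -- (ii) ↔ (iii)
    (((∃ y : ℕ → LaurentSeries k,
        (∀ n, ∀ i ∈ (y n).support, ((p : ℤ) ^ n) ∣ i) ∧
        ∀ n, a n = y n - (tt k) ^ (α n * p ^ n) * y (n + 1)) ∧
      (∃ z : ℕ → LaurentSeries k,
        (∀ n, ∀ i ∈ (z n).support, ((p : ℤ) ^ n) ∣ i) ∧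
        ∀ n, (tt k) ^ (α n * p ^ n) * a' n =
          (tt k) ^ (α n * p ^ n) * z n - z (n + 1)))
      ↔ (∃ N, ∀ n, N ≤ n → a n = 0)) := by
  constructor
  · constructor
    · rintro ⟨y, hy1, hy2⟩
      apply conclude p α a ha (y 0).support ((hy1 0).1)
      intro n i hi
      have h := lemY p α a y ha (fun n => (hy1 n).2) hy2 n n i hi le_rfl
      rw [Nat.sub_self] at h
      exact (HahnSeries.mem_support _ _).mpr h
    · rintro ⟨N, hN⟩
      exact constructY p α a hfin (fun n i hi => (ha n i hi).1) N hN
  · constructor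
    · rintro ⟨⟨y, hy1, hy2⟩, ⟨z, hz1, hz2⟩⟩
      apply conclude p α a ha (Set.Icc ((y 0).order) (-((z 0).order)))
        (Set.finite_Icc _ _)
      intro n i hi
      have hY := lemY p α a y ha hy1 hy2 n n i hi le_rfl
      have hZ := lemZ p α a a' z ha hrev hz1 hz2 n n i hi le_rfl
      rw [Nat.sub_self] at hY hZ
      constructor
      · exact HahnSeries.order_le_of_coeff_ne_zero hY
      · have h2 := HahnSeries.order_le_of_coeff_ne_zero hZ
        linarith
    · rintro ⟨N, hN⟩
      obtain ⟨y, hy1, hy2⟩ := constructY p α a hfin (fun n i hi => (ha n i hi).1) N hN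
      exact ⟨⟨y, fun n => (hy1 n).2, hy2⟩,
        constructZ p α a a' hrev (fun n i hi => (ha n i hi).1) N hN⟩
end
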